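/- Let G be a semimultiplicative set with composability predicate Comp and partial multiplication mul which is associative (whenever Comp s t and Comp (mul s t) u hold, also Comp t u and Comp s (mul t u) hold and mul (mul s t) u = mul s (mul t u), and conversely whenever Comp t u and Comp s (mul t u) hold, also Comp s t and Comp (mul s t) u hold with the same equality) and left cancellative (Comp g h₁ and Comp g h₂ with mul g h₁ = mul g h₂ imply h₁ = h₂). Let ℓ²(G) = lp (fun _ : G => ℂ) 2 with its Hilbert space structure and let e_h denote the standard basis vector lp.single 2 h 1. Then for every g ∈ G there exists a unique continuous linear map λ_g : ℓ²(G) → ℓ²(G) such that λ_g(e_h) = e_{mul g h} whenever Comp g h holds and λ_g(e_h) = 0 otherwise; moreover ‖λ_g‖ ≤ 1, λ_g ∘ (λ_g)† ∘ λ_g = λ_g (λ_g is a partial isometry, where † is the Hilbert-space adjoint), and λ_{mul g h} = λ_g ∘ λ_h whenever Comp g h holds. -/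

import Mathlib

open ContinuousLinearMap

noncomputable section Stmt10Aux

open Function ENNReal

variable {A G : Type*}

private def st10fun (j i : A → G) (x : G → ℂ) : G → ℂ := Function.extend j (x ∘ i) 0

private theorem st10fun_apply (j i : A → G) (hj : Injective j) (x : G → ℂ) (a : A) :
    st10fun j i x (j a) = x (i a) := hj.extend_apply _ _ _

private theorem st10fun_apply' (j i : A → G) (x : G → ℂ) {k : G} (hk : ¬ ∃ a, j a = k) :
    st10fun j i x k = 0 := Function.extend_apply' _ _ _ hk

private theorem st10fun_rpow (j i : A → G) (hj : Injective j) (x : G → ℂ) :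
    (fun k => ‖st10fun j i x k‖ ^ (2 : ℝ≥0∞).toReal)
      = Function.extend j (fun a => ‖x (i a)‖ ^ (2 : ℝ≥0∞).toReal) 0 := by
  have h2 : (0:ℝ) < (2 : ℝ≥0∞).toReal := by norm_num
  funext k
  by_cases hk : ∃ a, j a = k
  · obtain ⟨a, rfl⟩ := hk
    rw [st10fun_apply j i hj, hj.extend_apply]
  · rw [st10fun_apply' j i x hk, Function.extend_apply' _ _ _ hk]
    simp [Real.zero_rpow h2.ne']

private theorem st10_memℓp (j i : A → G) (hj : Injective j) (hi : Injective i)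
    (x : lp (fun _ : G => ℂ) 2) : Memℓp (st10fun j i ↑x) 2 := by
  have h2 : (0:ℝ) < (2 : ℝ≥0∞).toReal := by norm_num
  apply memℓp_gen
  rw [st10fun_rpow j i hj]
  exact (summable_extend_zero hj).mpr (((lp.memℓp x).summable h2).comp_injective hi)

private theorem st10_tsum_rpow (j i : A → G) (hj : Injective j) (x : G → ℂ) :
    ∑' k, ‖st10fun j i x k‖ ^ (2 : ℝ≥0∞).toReal
      = ∑' a, ‖x (i a)‖ ^ (2 : ℝ≥0∞).toReal := by
  rw [st10fun_rpow j i hj, tsum_extend_zero hj]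

private def st10T (j i : A → G) (hj : Injective j) (hi : Injective i) :
    lp (fun _ : G => ℂ) 2 →L[ℂ] lp (fun _ : G => ℂ) 2 :=
  LinearMap.mkContinuous
    { toFun := fun x => ⟨st10fun j i ↑x, st10_memℓp j i hj hi x⟩
      map_add' := by
        intro x y
        apply lp.ext
        funext k
        by_cases hk : ∃ a, j a = k
        · obtain ⟨a, rfl⟩ := hk
          show st10fun j i (↑(x + y)) (j a) = st10fun j i ↑x (j a) + st10fun j i ↑y (j a)
          rw [st10fun_apply j i hj, st10fun_apply j i hj, st10fun_apply j i hj, lp.coeFn_add]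
          rfl
        · show st10fun j i (↑(x + y)) k = st10fun j i ↑x k + st10fun j i ↑y k
          rw [st10fun_apply' j i _ hk, st10fun_apply' j i _ hk, st10fun_apply' j i _ hk, add_zero]
      map_smul' := by
        intro c x
        apply lp.ext
        funext k
        by_cases hk : ∃ a, j a = k
        · obtain ⟨a, rfl⟩ := hk
          show st10fun j i (↑(c • x)) (j a) = c • st10fun j i ↑x (j a)
          rw [st10fun_apply j i hj, st10fun_apply j i hj, lp.coeFn_smul]
          rfl
        · show st10fun j i (↑(c • x)) k = c • st10fun j i ↑x k
          rw [st10fun_apply' j i _ hk, st10fun_apply' j i _ hk, smul_zero] }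
    1
    (by
      intro x
      have h2 : (0:ℝ) < (2 : ℝ≥0∞).toReal := by norm_num
      rw [one_mul]
      apply lp.norm_le_of_tsum_le h2 (lp.norm_nonneg' x)
      show ∑' k, ‖st10fun j i (↑x) k‖ ^ (2 : ℝ≥0∞).toReal ≤ _
      rw [st10_tsum_rpow j i hj, lp.norm_rpow_eq_tsum h2 x]
      refine Summable.tsum_le_tsum_of_inj i hi (fun c _ => Real.rpow_nonneg (norm_nonneg _) _)
        (fun a => le_rfl) (((lp.memℓp x).summable h2).comp_injective hi)
        ((lp.memℓp x).summable h2))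

private theorem st10T_apply (j i : A → G) (hj : Injective j) (hi : Injective i)
    (x : lp (fun _ : G => ℂ) 2) (k : G) :
    (st10T j i hj hi x : G → ℂ) k = st10fun j i (↑x) k := rfl

private theorem st10T_norm_le (j i : A → G) (hj : Injective j) (hi : Injective i) :
    ‖st10T j i hj hi‖ ≤ 1 :=
  LinearMap.mkContinuous_norm_le _ zero_le_one _

private theorem st10T_single [DecidableEq G] (j i : A → G) (hj : Injective j) (hi : Injective i)
    (a : A) (v : ℂ) :
    st10T j i hj hi (lp.single 2 (i a) v) = lp.single 2 (j a) v := by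
  apply lp.ext
  funext k
  rw [st10T_apply, lp.single_apply]
  by_cases hk : ∃ b, j b = k
  · obtain ⟨b, rfl⟩ := hk
    rw [st10fun_apply j i hj, lp.single_apply]
    by_cases hab : b = a
    · subst hab
      rw [Pi.single_eq_same, Pi.single_eq_same]
    · rw [Pi.single_eq_of_ne (fun h => hab (hi h)), Pi.single_eq_of_ne (fun h => hab (hj h))]
  · rw [st10fun_apply' j i _ hk, Pi.single_eq_of_ne (fun h => hk ⟨a, h.symm⟩)]

private theorem st10T_single_zero [DecidableEq G] (j i : A → G) (hj : Injective j)
    (hi : Injective i) {k₀ : G} (hk₀ : ¬ ∃ a, i a = k₀) (v : ℂ) :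
    st10T j i hj hi (lp.single 2 k₀ v) = 0 := by
  apply lp.ext
  funext k
  rw [st10T_apply, lp.coeFn_zero, Pi.zero_apply]
  by_cases hk : ∃ b, j b = k
  · obtain ⟨b, rfl⟩ := hk
    rw [st10fun_apply j i hj, lp.single_apply, Pi.single_eq_of_ne (fun h => hk₀ ⟨b, h⟩)]
  · exact st10fun_apply' j i _ hk

private theorem st10_inner (j i : A → G) (hj : Injective j) (hi : Injective i)
    (x y : lp (fun _ : G => ℂ) 2) :
    @inner ℂ _ _ (st10T j i hj hi x) y
      = ∑' a, (starRingEnd ℂ) (x (i a)) * y (j a) := by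
  rw [lp.inner_eq_tsum]
  have key : (fun k => @inner ℂ _ _ ((st10T j i hj hi x : G → ℂ) k) (y k))
      = Function.extend j (fun a => (starRingEnd ℂ) (x (i a)) * y (j a)) 0 := by
    funext k
    rw [st10T_apply]
    by_cases hk : ∃ a, j a = k
    · obtain ⟨a, rfl⟩ := hk
      rw [st10fun_apply j i hj, hj.extend_apply]
      simp [RCLike.inner_apply, mul_comm]
    · rw [st10fun_apply' j i _ hk, Function.extend_apply' _ _ _ hk]
      simp
  rw [key, tsum_extend_zero hj]

private theorem st10_inner' (j i : A → G) (hj : Injective j) (hi : Injective i)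
    (x y : lp (fun _ : G => ℂ) 2) :
    @inner ℂ _ _ x (st10T j i hj hi y)
      = ∑' a, (starRingEnd ℂ) (x (j a)) * y (i a) := by
  rw [lp.inner_eq_tsum]
  have key : (fun k => @inner ℂ _ _ (x k) ((st10T j i hj hi y : G → ℂ) k))
      = Function.extend j (fun a => (starRingEnd ℂ) (x (j a)) * y (i a)) 0 := by
    funext k
    rw [st10T_apply]
    by_cases hk : ∃ a, j a = k
    · obtain ⟨a, rfl⟩ := hk
      rw [st10fun_apply j i hj, hj.extend_apply]
      simp [RCLike.inner_apply, mul_comm]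
    · rw [st10fun_apply' j i _ hk, Function.extend_apply' _ _ _ hk]
      simp
  rw [key, tsum_extend_zero hj]

private theorem st10_adjoint (j i : A → G) (hj : Injective j) (hi : Injective i) :
    adjoint (st10T j i hj hi) = st10T i j hi hj := by
  symm
  rw [eq_adjoint_iff]
  intro x y
  rw [st10_inner i j hi hj x y, st10_inner' j i hj hi x y]

end Stmt10Aux

/-- The left regular representation of an associative semimultiplicative set `(G, Comp, mul)`
with left cancellation: for each `g` there is a unique bounded operator `Λ g` on `ℓ²(G)` with
`Λ g (e h) = e (g·h)` when `g·h` is defined and `Λ g (e h) = 0` otherwise; each `Λ g` is a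
contraction and a partial isometry, and `Λ (g·h) = Λ g ∘ Λ h` whenever `g·h` is defined. -/
theorem stmt10 {G : Type*} [DecidableEq G]
    (Comp : G → G → Prop) (mul : ∀ g h, Comp g h → G)
    (assoc₁ : ∀ s t u (c : Comp s t) (c₁ : Comp (mul s t c) u),
      ∃ (c₂ : Comp t u) (c₃ : Comp s (mul t u c₂)),
        mul (mul s t c) u c₁ = mul s (mul t u c₂) c₃)
    (assoc₂ : ∀ s t u (c₂ : Comp t u) (c₃ : Comp s (mul t u c₂)),
      ∃ (c : Comp s t) (c₁ : Comp (mul s t c) u),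
        mul (mul s t c) u c₁ = mul s (mul t u c₂) c₃)
    (hcancel : ∀ g h₁ h₂ (c₁ : Comp g h₁) (c₂ : Comp g h₂),
      mul g h₁ c₁ = mul g h₂ c₂ → h₁ = h₂) :
    ∃ Λ : G → (lp (fun _ : G => ℂ) 2 →L[ℂ] lp (fun _ : G => ℂ) 2),
      (∀ g h (c : Comp g h), Λ g (lp.single 2 h 1) = lp.single 2 (mul g h c) 1) ∧
      (∀ g h, ¬ Comp g h → Λ g (lp.single 2 h 1) = 0) ∧
      (∀ g (T : lp (fun _ : G => ℂ) 2 →L[ℂ] lp (fun _ : G => ℂ) 2),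
        (∀ h (c : Comp g h), T (lp.single 2 h 1) = lp.single 2 (mul g h c) 1) →
        (∀ h, ¬ Comp g h → T (lp.single 2 h 1) = 0) → T = Λ g) ∧
      (∀ g, ‖Λ g‖ ≤ 1) ∧
      (∀ g, Λ g ∘L adjoint (Λ g) ∘L Λ g = Λ g) ∧
      (∀ g h (c : Comp g h), Λ (mul g h c) = Λ g ∘L Λ h) := by
  classical
  -- the injections
  set D : G → Type _ := fun g => {h // Comp g h} with hD
  have hval : ∀ g, Function.Injective (fun a : D g => a.1) := fun g => Subtype.val_injective
  set ι : ∀ g, D g → G := fun g a => mul g a.1 a.2 with hι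
  have hιinj : ∀ g, Function.Injective (ι g) := by
    intro g a b hab
    exact Subtype.ext (hcancel g a.1 b.1 a.2 b.2 hab)
  set Λ : G → (lp (fun _ : G => ℂ) 2 →L[ℂ] lp (fun _ : G => ℂ) 2) :=
    fun g => st10T (ι g) (fun a : D g => a.1) (hιinj g) (hval g) with hΛ
  -- property 1
  have prop1 : ∀ g h (c : Comp g h), Λ g (lp.single 2 h 1) = lp.single 2 (mul g h c) 1 := by
    intro g h c
    exact st10T_single (ι g) _ (hιinj g) (hval g) (⟨h, c⟩ : D g) 1
  -- property 2
  have prop2 : ∀ g h, ¬ Comp g h → Λ g (lp.single 2 h 1) = 0 := by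
    intro g h hc
    refine st10T_single_zero (ι g) _ (hιinj g) (hval g) ?_ 1
    rintro ⟨a, rfl⟩
    exact hc a.2
  -- uniqueness
  have uniq : ∀ g (T : lp (fun _ : G => ℂ) 2 →L[ℂ] lp (fun _ : G => ℂ) 2),
      (∀ h (c : Comp g h), T (lp.single 2 h 1) = lp.single 2 (mul g h c) 1) →
      (∀ h, ¬ Comp g h → T (lp.single 2 h 1) = 0) → T = Λ g := by
    intro g T hT1 hT2
    have hsingle : ∀ h, T (lp.single 2 h 1) = Λ g (lp.single 2 h 1) := by
      intro h
      by_cases c : Comp g h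
      · rw [hT1 h c, prop1 g h c]
      · rw [hT2 h c, prop2 g h c]
    refine ContinuousLinearMap.ext fun x => ?_
    have hx : HasSum (fun h : G => lp.single 2 h (x h)) x :=
      lp.hasSum_single (by norm_num) x
    have hsum : ∀ h : G, lp.single 2 h (x h)
        = (x h) • (lp.single 2 h (1 : ℂ) : lp (fun _ : G => ℂ) 2) := by
      intro h
      apply lp.ext
      funext k
      rw [lp.coeFn_smul, Pi.smul_apply]
      by_cases hkh : k = h
      · subst hkh
        simp [lp.single_apply]
      · simp [lp.single_apply, hkh]
    have hT : HasSum (fun h : G => T (lp.single 2 h (x h))) (T x) := hx.mapL T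
    have hΛ' : HasSum (fun h : G => (Λ g) (lp.single 2 h (x h))) ((Λ g) x) := hx.mapL (Λ g)
    have : (fun h : G => T (lp.single 2 h (x h)))
        = fun h : G => (Λ g) (lp.single 2 h (x h)) := by
      funext h
      rw [hsum h, map_smul, map_smul, hsingle h]
    rw [this] at hT
    exact hT.unique hΛ'
  refine ⟨Λ, prop1, prop2, uniq, ?_, ?_, ?_⟩
  · intro g
    exact st10T_norm_le _ _ _ _
  · -- partial isometry
    intro g
    have hadj : adjoint (Λ g) = st10T (fun a : D g => a.1) (ι g) (hval g) (hιinj g) :=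
      st10_adjoint _ _ _ _
    apply uniq g
    · intro h c
      simp only [ContinuousLinearMap.comp_apply]
      rw [prop1 g h c, hadj]
      have h1 : st10T (fun a : D g => a.1) (ι g) (hval g) (hιinj g)
          (lp.single 2 (mul g h c) 1) = lp.single 2 h 1 :=
        st10T_single (fun a : D g => a.1) (ι g) (hval g) (hιinj g) (⟨h, c⟩ : D g) 1
      rw [h1, prop1 g h c]
    · intro h hc
      simp only [ContinuousLinearMap.comp_apply]
      rw [prop2 g h hc, map_zero, map_zero]
  · -- multiplicativity
    intro g h c
    symm
    apply uniq (mul g h c)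
    · intro k c₁
      obtain ⟨c₂, c₃, heq⟩ := assoc₁ g h k c c₁
      simp only [ContinuousLinearMap.comp_apply]
      rw [prop1 h k c₂, prop1 g (mul h k c₂) c₃, ← heq]
    · intro k hk
      simp only [ContinuousLinearMap.comp_apply]
      by_cases c₂ : Comp h k
      · rw [prop1 h k c₂]
        refine prop2 g (mul h k c₂) ?_
        intro c₃
        obtain ⟨c', c₁', heq'⟩ := assoc₂ g h k c₂ c₃
        exact hk c₁'
      · rw [prop2 h k c₂, map_zero]
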